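/- Let α > 0, let ψ₁, ψ₂ ∈ C²(ℝ) be convex, let k₁, k₂ ≥ 0 be real, and let φ₁, φ₂ ∈ C¹(ℝ) satisfy φᵢ'(v) = v·ψᵢ'(v) for all v ∈ ℝ (i = 1,2). Define η(ρ,u) := k₁ψ₁(u + √α ρ) + k₂ψ₂(u − √α ρ) and q(ρ,u) := k₁φ₁(u + √α ρ) + k₂φ₂(u − √α ρ). Then η is convex on ℝ² (jointly in (ρ,u)), and the entropy-flux relations ∂_u q = ρ ∂_ρ η + u ∂_u η and ∂_ρ q = u ∂_ρ η + αρ ∂_u η hold at every (ρ,u) ∈ ℝ². -/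

import Mathlib

/-- The entropy `η = k₁ψ₁(u+√αρ) + k₂ψ₂(u-√αρ)` with `ψᵢ` convex and `kᵢ ≥ 0` is jointly
convex in `(ρ,u)`, and together with `q = k₁φ₁(u+√αρ) + k₂φ₂(u-√αρ)` (where
`φᵢ'(v) = vψᵢ'(v)`) it satisfies the entropy-flux relations of the coupled Burgers
system. -/
theorem stmt16 (α : ℝ) (hα : 0 < α) (ψ₁ ψ₂ φ₁ φ₂ : ℝ → ℝ)
    (hψ₁ : ContDiff ℝ 2 ψ₁) (hψ₂ : ContDiff ℝ 2 ψ₂)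
    (hc₁ : ConvexOn ℝ Set.univ ψ₁) (hc₂ : ConvexOn ℝ Set.univ ψ₂)
    (k₁ k₂ : ℝ) (hk₁ : 0 ≤ k₁) (hk₂ : 0 ≤ k₂)
    (hφ₁ : ∀ v : ℝ, HasDerivAt φ₁ (v * deriv ψ₁ v) v)
    (hφ₂ : ∀ v : ℝ, HasDerivAt φ₂ (v * deriv ψ₂ v) v) :
    ConvexOn ℝ Set.univ (fun p : ℝ × ℝ =>
      k₁ * ψ₁ (p.2 + Real.sqrt α * p.1) + k₂ * ψ₂ (p.2 - Real.sqrt α * p.1)) ∧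
    ∀ r v : ℝ,
      deriv (fun w =>
          k₁ * φ₁ (w + Real.sqrt α * r) + k₂ * φ₂ (w - Real.sqrt α * r)) v =
        r * deriv (fun s =>
            k₁ * ψ₁ (v + Real.sqrt α * s) + k₂ * ψ₂ (v - Real.sqrt α * s)) r +
          v * deriv (fun w =>
            k₁ * ψ₁ (w + Real.sqrt α * r) + k₂ * ψ₂ (w - Real.sqrt α * r)) v ∧
      deriv (fun s =>
          k₁ * φ₁ (v + Real.sqrt α * s) + k₂ * φ₂ (v - Real.sqrt α * s)) r =
        v * deriv (fun s =>
            k₁ * ψ₁ (v + Real.sqrt α * s) + k₂ * ψ₂ (v - Real.sqrt α * s)) r +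
          α * r * deriv (fun w =>
            k₁ * ψ₁ (w + Real.sqrt α * r) + k₂ * ψ₂ (w - Real.sqrt α * r)) v := by
  set c := Real.sqrt α with hc
  have hcc : c * c = α := Real.mul_self_sqrt hα.le
  have hψ₁' : ∀ x : ℝ, HasDerivAt ψ₁ (deriv ψ₁ x) x :=
    fun x => ((hψ₁.differentiable two_ne_zero) x).hasDerivAt
  have hψ₂' : ∀ x : ℝ, HasDerivAt ψ₂ (deriv ψ₂ x) x :=
    fun x => ((hψ₂.differentiable two_ne_zero) x).hasDerivAt
  constructor
  · refine ⟨convex_univ, fun p _ q _ a b ha hb hab => ?_⟩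
    have e1 := hc₁.2 (Set.mem_univ (p.2 + c * p.1)) (Set.mem_univ (q.2 + c * q.1)) ha hb hab
    have e2 := hc₂.2 (Set.mem_univ (p.2 - c * p.1)) (Set.mem_univ (q.2 - c * q.1)) ha hb hab
    simp only [smul_eq_mul, Prod.fst_add, Prod.snd_add, Prod.smul_fst, Prod.smul_snd] at *
    have a1 : (a * p.2 + b * q.2) + c * (a * p.1 + b * q.1)
        = a * (p.2 + c * p.1) + b * (q.2 + c * q.1) := by ring
    have a2 : (a * p.2 + b * q.2) - c * (a * p.1 + b * q.1)
        = a * (p.2 - c * p.1) + b * (q.2 - c * q.1) := by ring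
    rw [a1, a2]
    nlinarith [mul_le_mul_of_nonneg_left e1 hk₁, mul_le_mul_of_nonneg_left e2 hk₂]
  · intro r v
    -- inner affine derivatives
    have h1 : HasDerivAt (fun w : ℝ => w + c * r) 1 v := (hasDerivAt_id v).add_const _
    have h2 : HasDerivAt (fun w : ℝ => w - c * r) 1 v := (hasDerivAt_id v).sub_const _
    have h3 : HasDerivAt (fun s : ℝ => v + c * s) c r := by
      simpa using ((hasDerivAt_id r).const_mul c).const_add v
    have h4 : HasDerivAt (fun s : ℝ => v - c * s) (-c) r := by
      simpa using ((hasDerivAt_id r).const_mul c).const_sub v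
    set A := deriv ψ₁ (v + c * r) with hA
    set B := deriv ψ₂ (v - c * r) with hB
    -- derivative of η in u
    have dηu : HasDerivAt (fun w => k₁ * ψ₁ (w + c * r) + k₂ * ψ₂ (w - c * r))
        (k₁ * A + k₂ * B) v := by
      have t1 := ((hψ₁' (v + c * r)).comp v h1).const_mul k₁
      have t2 := ((hψ₂' (v - c * r)).comp v h2).const_mul k₂
      simpa [Function.comp, Pi.add_def, hA, hB] using t1.add t2
    -- derivative of η in ρ
    have dηr : HasDerivAt (fun s => k₁ * ψ₁ (v + c * s) + k₂ * ψ₂ (v - c * s))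
        (k₁ * (A * c) + k₂ * (B * (-c))) r := by
      have t1 := ((hψ₁' (v + c * r)).comp r h3).const_mul k₁
      have t2 := ((hψ₂' (v - c * r)).comp r h4).const_mul k₂
      simpa [Function.comp, Pi.add_def, hA, hB] using t1.add t2
    -- derivative of q in u
    have dqu : HasDerivAt (fun w => k₁ * φ₁ (w + c * r) + k₂ * φ₂ (w - c * r))
        (k₁ * ((v + c * r) * A) + k₂ * ((v - c * r) * B)) v := by
      have t1 := ((hφ₁ (v + c * r)).comp v h1).const_mul k₁
      have t2 := ((hφ₂ (v - c * r)).comp v h2).const_mul k₂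
      simpa [Function.comp, Pi.add_def, hA, hB] using t1.add t2
    -- derivative of q in ρ
    have dqr : HasDerivAt (fun s => k₁ * φ₁ (v + c * s) + k₂ * φ₂ (v - c * s))
        (k₁ * ((v + c * r) * A * c) + k₂ * ((v - c * r) * B * (-c))) r := by
      have t1 := ((hφ₁ (v + c * r)).comp r h3).const_mul k₁
      have t2 := ((hφ₂ (v - c * r)).comp r h4).const_mul k₂
      simpa [Function.comp, mul_assoc, Pi.add_def, hA, hB] using t1.add t2
    rw [dηu.deriv, dηr.deriv, dqu.deriv, dqr.deriv]
    constructor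
    · ring
    · have : α = c * c := hcc.symm
      rw [this]; ring
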